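/- If a quasi-choice c is s-majoritarian for some rational s ∈ (0,1) witnessed by p ballots with p·s ∈ ℕ and s < (p−1)/p, then for any rational s' with 0 < s' < s, c is also s'-majoritarian; in particular, adding hypercritical ballots (empty quasi-choices) to a t-majoritarian family in the ratio q = p(t/s − 1) converts it into an s-majoritarian family. -/
import Mathlib


/-- `r` rationalizes the quasi-choice `c`: `c A` is the set of `r`-maximal elements of `A`. -/
def Rationalizes {X : Type*} (r : X → X → Prop) (c : Set X → Set X) : Prop :=
  ∀ A : Set X, c A = {a ∈ A | ∀ b ∈ A, ¬ r b a}

/-- `c` is freely rationalizable (a ballot): rationalized by an arbitrary binary relation. -/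
def FreelyRat {X : Type*} (c : Set X → Set X) : Prop :=
  ∃ r : X → X → Prop, Rationalizes r c

/-- `c` is asymmetrically rationalizable. -/
def AsymRat {X : Type*} (c : Set X → Set X) : Prop :=
  ∃ r : X → X → Prop, (∀ a b, r a b → ¬ r b a) ∧ Rationalizes r c

/-- Contractiveness: `c` is a quasi-choice. -/
def IsQuasiChoice {X : Type*} (c : Set X → Set X) : Prop :=
  ∀ A : Set X, c A ⊆ A

/-- Axiom α (Chernoff, Standard Contraction Consistency). -/
def AxiomAlpha {X : Type*} (c : Set X → Set X) : Prop :=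
  ∀ ⦃A B : Set X⦄ ⦃x : X⦄, A ⊆ B → x ∈ A → x ∈ c B → x ∈ c A

/-- Axiom γ (Standard Expansion Consistency). -/
def AxiomGamma {X : Type*} (c : Set X → Set X) : Prop :=
  ∀ ⦃A B : Set X⦄ ⦃x : X⦄, x ∈ c A → x ∈ c B → x ∈ c (A ∪ B)

/-- A liberal representation of `c` by the family of ballots `v`. -/
def IsLiberalRep {X : Type*} (c : Set X → Set X) {k : ℕ} (v : Fin k → Set X → Set X) : Prop :=
  (∀ i, FreelyRat (v i)) ∧
    ∀ A : Set X, ∀ x ∈ A, (x ∈ c A ↔ ∃ i, x ∈ v i A)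

/-- A democratic representation of `c` by the family of ballots `v`:
an item is chosen iff more than half of the ballots endorse it. -/
def IsDemRep {X : Type*} (c : Set X → Set X) {k : ℕ} (v : Fin k → Set X → Set X) : Prop :=
  (∀ i, FreelyRat (v i)) ∧
    ∀ A : Set X, ∀ x ∈ A, (x ∈ c A ↔ 2 * Nat.card {i : Fin k // x ∈ v i A} > k)

/-- The liberal number of `c`: the minimum size of a liberal representation (⊤ if none). -/
noncomputable def lib {X : Type*} (c : Set X → Set X) : ℕ∞ :=
  sInf {n : ℕ∞ | ∃ (k : ℕ) (v : Fin k → Set X → Set X), 0 < k ∧ IsLiberalRep c v ∧ n = (k : ℕ∞)}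

/-- The democratic number of `c`: the minimum size of a democratic representation (⊤ if none). -/
noncomputable def dem {X : Type*} (c : Set X → Set X) : ℕ∞ :=
  sInf {n : ℕ∞ | ∃ (k : ℕ) (v : Fin k → Set X → Set X), 0 < k ∧ IsDemRep c v ∧ n = (k : ℕ∞)}

/-- `c` is `s`-majoritarian: some finite family of ballots selects exactly the items
endorsed by a share of ballots strictly larger than `s`. -/
def Majoritarian {X : Type*} (s : ℝ) (c : Set X → Set X) : Prop :=
  ∃ (k : ℕ) (v : Fin k → Set X → Set X), 0 < k ∧ (∀ i, FreelyRat (v i)) ∧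
    ∀ A : Set X, ∀ x ∈ A,
      (x ∈ c A ↔ (Nat.card {i : Fin k // x ∈ v i A} : ℝ) / (k : ℝ) > s)

theorem stmt10 {X : Type*} [Fintype X] (c : Set X → Set X) (hq : IsQuasiChoice c)
    (s : ℚ) (hs0 : 0 < s) (hs1 : s < 1)
    (p : ℕ) (hp : 0 < p) (v : Fin p → Set X → Set X)
    (hball : ∀ i, FreelyRat (v i))
    (hint : ∃ m : ℕ, (p : ℚ) * s = (m : ℚ))
    (hlt : s < ((p : ℚ) - 1) / (p : ℚ))
    (hmaj : ∀ A : Set X, ∀ x ∈ A,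
      (x ∈ c A ↔ (Nat.card {i : Fin p // x ∈ v i A} : ℚ) / (p : ℚ) > s)) :
    ∀ s' : ℚ, 0 < s' → s' < s → Majoritarian (s' : ℝ) c := by
  obtain ⟨m, hm⟩ := hint
  intro s' hs'0 hs's
  have hex : ∃ q : ℕ, (m : ℚ) ≤ s' * ((p : ℚ) + q) := by
    obtain ⟨q, hq'⟩ := exists_nat_ge ((m : ℚ) / s')
    refine ⟨q, ?_⟩
    have : (m : ℚ) ≤ s' * q := by
      rw [div_le_iff₀ hs'0] at hq'; linarith [hq']
    nlinarith [hs'0.le, Nat.cast_nonneg (α := ℚ) p]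
  set q := Nat.find hex with hqdef
  have h1 : (m : ℚ) ≤ s' * ((p : ℚ) + q) := Nat.find_spec hex
  have hps : (p : ℚ) * s = m := hm
  have hppos : (0 : ℚ) < p := by exact_mod_cast hp
  have hq0 : q ≠ 0 := by
    intro h
    rw [h] at h1
    push_cast at h1
    nlinarith [mul_lt_mul_of_pos_right hs's hppos]
  have h2 : s' * ((p : ℚ) + q) < (m : ℚ) + 1 := by
    obtain ⟨q', hqe⟩ := Nat.exists_eq_succ_of_ne_zero hq0
    have hmin : ¬ (m : ℚ) ≤ s' * ((p : ℚ) + q') :=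
      Nat.find_min hex (by omega)
    push_neg at hmin
    have hcq : (q : ℚ) = (q' : ℚ) + 1 := by rw [hqe]; push_cast; ring
    rw [hcq]
    nlinarith [hs's, hs1]
  set k := p + q with hk
  set w : Fin k → Set X → Set X :=
    fun i => Sum.elim v (fun _ _ => (∅ : Set X)) (finSumFinEquiv.symm i) with hw
  refine ⟨k, w, by omega, ?_, ?_⟩
  · intro i
    rcases h : finSumFinEquiv.symm i with j | j
    · obtain ⟨r, hr⟩ := hball j
      exact ⟨r, by simpa [hw, h] using hr⟩
    · refine ⟨fun _ _ => True, fun A => ?_⟩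
      have : w i A = ∅ := by simp [hw, h]
      rw [this]
      refine (Set.eq_empty_iff_forall_notMem.mpr ?_).symm
      rintro a ⟨ha, hall⟩
      exact hall a ha trivial
  · intro A x hx
    have hcard : Nat.card {i : Fin k // x ∈ w i A} = Nat.card {i : Fin p // x ∈ v i A} := by
      have e1 : {i : Fin k // x ∈ w i A} ≃
          {j : Fin p ⊕ Fin q // x ∈ Sum.elim v (fun _ _ => (∅ : Set X)) j A} :=
        (finSumFinEquiv.symm).subtypeEquiv (fun i => Iff.rfl)
      have e2 : {j : Fin p ⊕ Fin q // x ∈ Sum.elim v (fun _ _ => (∅ : Set X)) j A} ≃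
          {i : Fin p // x ∈ v i A} ⊕ {i : Fin q // x ∈ (∅ : Set X)} :=
        Equiv.subtypeSum
      have hE : IsEmpty {i : Fin q // x ∈ (∅ : Set X)} := ⟨fun ⟨_, h⟩ => h⟩
      rw [Nat.card_congr (e1.trans e2), Nat.card_sum, @Nat.card_of_isEmpty _ hE, Nat.add_zero]
    rw [hcard]
    set N := Nat.card {i : Fin p // x ∈ v i A} with hN
    have hold := hmaj A x hx
    have hiff1 : x ∈ c A ↔ m + 1 ≤ N := by
      rw [hold, gt_iff_lt, lt_div_iff₀ hppos]
      constructor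
      · intro h
        have h' : (m : ℚ) < (N : ℚ) := by nlinarith
        have : m < N := by exact_mod_cast h'
        omega
      · intro h
        have : (m : ℚ) + 1 ≤ (N : ℚ) := by exact_mod_cast h
        nlinarith
    rw [hiff1]
    have hkQ : ((k : ℕ) : ℚ) = (p : ℚ) + (q : ℚ) := by rw [hk]; push_cast; ring
    have hkpos : (0 : ℝ) < (k : ℝ) := by
      have : 0 < k := by omega
      exact_mod_cast this
    rw [gt_iff_lt, lt_div_iff₀ hkpos]
    constructor
    · intro h
      have hQ : ((m : ℚ) + 1) ≤ (N : ℚ) := by exact_mod_cast h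
      have hlt2 : s' * ((k : ℕ) : ℚ) < (N : ℚ) := by rw [hkQ]; linarith
      exact_mod_cast hlt2
    · intro h
      have hR : (s' : ℚ) * ((k : ℕ) : ℚ) < (N : ℚ) := by exact_mod_cast h
      rw [hkQ] at hR
      have h' : (m : ℚ) < (N : ℚ) := lt_of_le_of_lt h1 hR
      have : m < N := by exact_mod_cast h'
      omega
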